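/- For every integer m ≥ 2 and every positive real x, f_m(x) = (2 + (x^(2m))^(1/(m+1)))^((m+1)/(2m)) / sqrt(4 + x^2) satisfies f_m(x) ≤ (2 + 2^m)^((m+1)/(2m)) / sqrt(4 + 2^(m+1)). -/

import Mathlib

open Real

lemma holder2 {p q : ℝ} (hpq : Real.HolderConjugate p q) {a b c d : ℝ}
    (ha : 0 ≤ a) (hb : 0 ≤ b) (hc : 0 ≤ c) (hd : 0 ≤ d) :
    a * b + c * d ≤ (a ^ p + c ^ p) ^ (1/p) * (b ^ q + d ^ q) ^ (1/q) := by
  have := Real.inner_le_Lp_mul_Lq_of_nonneg (s := (Finset.univ : Finset (Fin 2)))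
    (f := ![a, c]) (g := ![b, d]) hpq (by intro i _; fin_cases i <;> simpa)
    (by intro i _; fin_cases i <;> simpa)
  simpa [Fin.sum_univ_two] using this

lemma core (M : ℝ) (hM : 1 ≤ M) (t : ℝ) (ht : 0 < t) :
    (2 + t) ^ ((M+1)/M) * 2 ≤ (4 + t ^ ((M+1)/M)) * (2 + 2 ^ M) ^ (1/M) := by
  have hM0 : (0:ℝ) < M := lt_of_lt_of_le one_pos hM
  have hM1 : (0:ℝ) < M + 1 := by linarith
  set q : ℝ := (M+1)/M with hq
  have hq0 : 0 < q := by positivity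
  have hq1 : 1 < q := by
    rw [hq, lt_div_iff₀ hM0]; linarith
  have hconj : Real.HolderConjugate q (M+1) := by
    rw [Real.holderConjugate_iff]
    constructor
    · exact hq1
    · rw [hq]; field_simp
  have ha : (0:ℝ) ≤ (4:ℝ) ^ (1/q) := (Real.rpow_pos_of_pos (by norm_num) _).le
  have hb : (0:ℝ) ≤ 2 * (4:ℝ) ^ (-(1/q)) := by positivity
  have H := holder2 hconj ha hb ht.le (zero_le_one)
  have hab : (4:ℝ) ^ (1/q) * (2 * (4:ℝ) ^ (-(1/q))) = 2 := by
    rw [mul_comm (2:ℝ), ← mul_assoc, ← Real.rpow_add (by norm_num : (0:ℝ) < 4)]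
    norm_num
  have haq : ((4:ℝ) ^ (1/q)) ^ q = 4 := by
    rw [← Real.rpow_mul (by norm_num : (0:ℝ) ≤ 4), one_div,
      inv_mul_cancel₀ (ne_of_gt hq0), Real.rpow_one]
  have h42 : (4:ℝ) = (2:ℝ) ^ (2:ℝ) := by
    have hc : ((2:ℕ):ℝ) = (2:ℝ) := by norm_num
    rw [← hc, Real.rpow_natCast]; norm_num
  have hbq : ((2:ℝ) * (4:ℝ) ^ (-(1/q))) ^ (M+1) = (2:ℝ) ^ (1-M) := by
    rw [Real.mul_rpow (by norm_num) (by positivity), h42,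
      ← Real.rpow_mul (by norm_num : (0:ℝ) ≤ 2),
      ← Real.rpow_mul (by norm_num : (0:ℝ) ≤ 2),
      ← Real.rpow_add two_pos]
    congr 1
    rw [hq]; field_simp; ring
  rw [hab, haq, hbq, mul_one, Real.one_rpow] at H
  -- H : 2 + t ≤ (4 + t^q)^(1/q) * (2^(1-M) + 1)^(1/(M+1))
  have h2t : (0:ℝ) ≤ 2 + t := by linarith
  have hrpow := Real.rpow_le_rpow h2t H hq0.le
  rw [Real.mul_rpow (by positivity) (by positivity),
    ← Real.rpow_mul (by positivity), ← Real.rpow_mul (by positivity),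
    one_div_mul_cancel hq0.ne', Real.rpow_one] at hrpow
  have hqM : 1 / (M+1) * q = 1 / M := by rw [hq]; field_simp
  rw [hqM] at hrpow
  have e1 : (2:ℝ)^(1-M) = 2 * 2^(-M) := by
    rw [show (1-M) = 1 + -M by ring, Real.rpow_add two_pos, Real.rpow_one]
  have e2 : (2:ℝ)^M * 2^(-M) = 1 := by
    rw [← Real.rpow_add two_pos]; norm_num
  have hsum : (2:ℝ) ^ (1-M) + 1 = (2 + 2^M) * 2^(-M) := by
    rw [e1, add_mul, e2]
  have hfin : ((2:ℝ)^(1-M) + 1) ^ (1/M) = (2 + 2^M) ^ (1/M) / 2 := by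
    rw [hsum, Real.mul_rpow (by positivity) (by positivity),
      ← Real.rpow_mul (by norm_num : (0:ℝ) ≤ 2), neg_mul,
      mul_one_div_cancel hM0.ne', Real.rpow_neg_one]
    ring
  rw [hfin] at hrpow
  nlinarith [hrpow]

theorem stmt_2 (m : ℕ) (hm : 2 ≤ m) (x : ℝ) (hx : 0 < x) :
    (2 + (x ^ (2 * (m:ℝ))) ^ (1 / ((m:ℝ) + 1))) ^ (((m:ℝ) + 1) / (2 * m)) /
        Real.sqrt (4 + x ^ 2) ≤
      (2 + (2:ℝ) ^ (m:ℝ)) ^ (((m:ℝ) + 1) / (2 * m)) /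
        Real.sqrt (4 + 2 ^ ((m:ℝ) + 1)) := by
  have hM2 : (2:ℝ) ≤ (m:ℝ) := by exact_mod_cast hm
  set M : ℝ := (m:ℝ) with hMdef
  have hM1 : (1:ℝ) ≤ M := by linarith
  have hM0 : (0:ℝ) < M := by linarith
  have hM1' : (0:ℝ) < M + 1 := by linarith
  set t : ℝ := (x ^ (2*M)) ^ (1/(M+1)) with htdef
  have ht : 0 < t := Real.rpow_pos_of_pos (Real.rpow_pos_of_pos hx _) _
  set q : ℝ := (M+1)/M with hqdef
  have hq0 : 0 < q := by positivity
  have htq : t ^ q = x ^ 2 := by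
    rw [htdef, ← Real.rpow_natCast x 2, ← Real.rpow_mul hx.le (2*M) (1/(M+1)),
      ← Real.rpow_mul hx.le]
    congr 1
    rw [hqdef]
    push_cast
    field_simp
  have hpos2M : (0:ℝ) < 2 + 2^M := by positivity
  have hnum1 : (2 + t) ^ ((M+1)/(2*M)) = Real.sqrt ((2+t)^q) := by
    rw [Real.sqrt_eq_rpow, ← Real.rpow_mul (by positivity : (0:ℝ) ≤ 2+t)]
    congr 1
    rw [hqdef]; field_simp
  have hnum2 : (2 + (2:ℝ)^M) ^ ((M+1)/(2*M)) = Real.sqrt ((2+(2:ℝ)^M)^q) := by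
    rw [Real.sqrt_eq_rpow, ← Real.rpow_mul hpos2M.le]
    congr 1
    rw [hqdef]; field_simp
  have hD : (4:ℝ) + 2^(M+1) = 2*(2+2^M) := by
    rw [Real.rpow_add two_pos, Real.rpow_one]; ring
  have hDpos : (0:ℝ) < 4 + 2^(M+1) := by positivity
  have hBpos : (0:ℝ) < 4 + x^2 := by positivity
  rw [hnum1, hnum2, ← Real.sqrt_div (by positivity), ← Real.sqrt_div (by positivity)]
  apply Real.sqrt_le_sqrt
  rw [div_le_div_iff₀ hBpos hDpos]
  have hcore := core M hM1 t ht
  have hpow : (2+(2:ℝ)^M)^q = (2+(2:ℝ)^M)^(1/M) * (2+2^M) := by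
    nth_rewrite 3 [show (2+(2:ℝ)^M) = (2+(2:ℝ)^M)^(1:ℝ) from (Real.rpow_one _).symm]
    rw [← Real.rpow_add hpos2M]
    congr 1
    rw [hqdef]; field_simp
    ring
  rw [hD, hpow, ← htq]
  rw [← hqdef] at hcore
  nlinarith [mul_le_mul_of_nonneg_right hcore hpos2M.le]
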